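/- Let P ⊂ ℚ² be a centrally symmetric Fano polygon with non-empty basket of R-singularities and two pairs of opposite long edges ±E₁, ±E₂ with primitive inner normals u₁, u₂ ∈ Hom(ℤ²,ℤ). Then det(u₁, u₂) = ±1, i.e. u₁ and u₂ form a basis of the dual lattice. -/
import Mathlib


abbrev Z2 := ℤ × ℤ
abbrev Q2 := ℚ × ℚ

/-- The canonical embedding of lattice points into `ℚ × ℚ`. -/
def toQ (v : Z2) : Q2 := ((v.1 : ℚ), (v.2 : ℚ))

/-- Pairing of a dual lattice vector with a rational point. -/
def dotQ (u : Z2) (x : Q2) : ℚ := (u.1 : ℚ) * x.1 + (u.2 : ℚ) * x.2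

/-- A lattice vector is primitive if its coordinates are coprime. -/
def IsPrimitive (v : Z2) : Prop := Int.gcd v.1 v.2 = 1

/-- Action of an integer matrix on `ℚ × ℚ`. -/
def applyM (G : Matrix (Fin 2) (Fin 2) ℤ) (x : Q2) : Q2 :=
  ((G 0 0 : ℚ) * x.1 + (G 0 1 : ℚ) * x.2, (G 1 0 : ℚ) * x.1 + (G 1 1 : ℚ) * x.2)

/-- Action of an integer matrix on `ℤ × ℤ`. -/
def applyZ (G : Matrix (Fin 2) (Fin 2) ℤ) (v : Z2) : Z2 :=
  (G 0 0 * v.1 + G 0 1 * v.2, G 1 0 * v.1 + G 1 1 * v.2)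

/-- The convex hull in `ℚ²` of a finite set of lattice points. -/
def hull (V : Finset Z2) : Set Q2 := convexHull ℚ (toQ '' (V : Set Z2))

/-- `V` is the vertex set of a Fano polygon: the origin is in the strict interior of the
convex hull, every vertex is primitive, and the points of `V` are exactly the vertices
(extreme points) of the hull. -/
def IsFanoPolygon (V : Finset Z2) : Prop :=
  (0 : Q2) ∈ interior (hull V) ∧
  (∀ v ∈ V, IsPrimitive v) ∧
  toQ '' (V : Set Z2) = Set.extremePoints ℚ (hull V)

/-- `E` is the edge of `P` with primitive inner normal `u` and height `h`:
`u ≥ -h` holds on `P`, with equality exactly on `E`, and `E` has more than one point. -/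
def IsEdge (P E : Set Q2) (u : Z2) (h : ℤ) : Prop :=
  IsPrimitive u ∧ 0 < h ∧
  (∀ x ∈ P, -(h : ℚ) ≤ dotQ u x) ∧
  E = {x ∈ P | dotQ u x = -(h : ℚ)} ∧
  ∃ a b, a ∈ E ∧ b ∈ E ∧ a ≠ b

/-- The lattice length of an edge: the number of lattice points on it minus one. -/
noncomputable def latticeLength (E : Set Q2) : ℕ :=
  Set.ncard {v : Z2 | toQ v ∈ E} - 1

/-- An edge is long if its lattice length is at least its height. -/
def IsLongEdge (P E : Set Q2) (u : Z2) (h : ℤ) : Prop :=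
  IsEdge P E u h ∧ h ≤ (latticeLength E : ℤ)

/-- `P` has a non-empty basket of R-singularities: some edge has lattice length
not a multiple of its height. -/
def HasRsing (P : Set Q2) : Prop :=
  ∃ E u h, IsEdge P E u h ∧ ¬ (h ∣ (latticeLength E : ℤ))

/-- Central symmetry: `P = -P`. -/
def CentSym (P : Set Q2) : Prop := ∀ x, x ∈ P ↔ -x ∈ P

/-- `G` is a lattice automorphism of `P`. -/
def IsAut (G : Matrix (Fin 2) (Fin 2) ℤ) (P : Set Q2) : Prop :=
  IsUnit G.det ∧ applyM G '' P = P

/-- `P` admits a lattice automorphism of order 3. -/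
def ThreeSym (P : Set Q2) : Prop := ∃ G, IsAut G P ∧ G ^ 3 = 1 ∧ G ≠ 1

/-- `P` is symmetric: the fixed-point set of its automorphism group is `{0}`. -/
def SymmetricPolygon (P : Set Q2) : Prop :=
  {x : Q2 | ∀ G, IsAut G P → applyM G x = x} = {0}

/-- For a centrally symmetric Fano polygon with non-empty basket of R-singularities and
two pairs of opposite long edges with non-parallel primitive inner normals `u₁, u₂`, the
normals form a basis of the dual lattice: `det(u₁, u₂) = ±1`. -/
def dotZ (u v : Z2) : ℤ := u.1 * v.1 + u.2 * v.2

lemma dotQ_toQ (u v : Z2) : dotQ u (toQ v) = (dotZ u v : ℚ) := by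
  simp [dotQ, toQ, dotZ]

lemma dotQ_neg (u : Z2) (x : Q2) : dotQ u (-x) = -dotQ u x := by
  simp [dotQ]; ring

lemma dotQ_neg_left (u : Z2) (x : Q2) : dotQ (-u) x = -dotQ u x := by
  simp [dotQ]; ring

lemma toQ_neg (v : Z2) : toQ (-v) = -toQ v := by
  simp [toQ, Prod.ext_iff]

lemma parallel_primitive (u w : Z2) (hu : IsPrimitive u) (hw : IsPrimitive w)
    (h : u.1 * w.2 - u.2 * w.1 = 0) : w = u ∨ w = -u := by
  obtain ⟨x, y, hxy⟩ := Int.isCoprime_iff_gcd_eq_one.mpr hu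
  set k := x * w.1 + y * w.2 with hk
  have h1 : w.1 = k * u.1 := by rw [hk]; linear_combination (-w.1) * hxy - y * h
  have h2 : w.2 = k * u.2 := by rw [hk]; linear_combination (-w.2) * hxy + x * h
  have hg : Int.gcd (k * u.1) (k * u.2) = 1 := by rw [← h1, ← h2]; exact hw
  rw [Int.gcd_mul_left, hu, mul_one] at hg
  rcases Int.natAbs_eq_iff.mp hg with hk1 | hk1
  · left; rw [Prod.ext_iff, h1, h2, hk1]; norm_num
  · right; rw [Prod.ext_iff, h1, h2, hk1]; constructor <;> simp

lemma edge_span (P E : Set Q2) (u₁ u₂ : Z2) (h₁ : ℤ) (hE : IsEdge P E u₁ h₁)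
    (hlong : h₁ ≤ (latticeLength E : ℤ)) :
    ∃ a b : Z2, toQ a ∈ E ∧ toQ b ∈ E ∧
      (latticeLength E : ℤ) * |u₁.1 * u₂.2 - u₁.2 * u₂.1| ≤ dotZ u₂ b - dotZ u₂ a := by
  obtain ⟨hprim, hpos, hineq, hEdef, -⟩ := hE
  set S : Set Z2 := {v : Z2 | toQ v ∈ E} with hSdef
  have hLL : latticeLength E = S.ncard - 1 := rfl
  have hfin : S.Finite := by
    by_contra hinf
    rw [hLL, Set.Infinite.ncard hinf] at hlong
    simp at hlong
    omega
  have hne0 : latticeLength E ≠ 0 := by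
    intro h
    rw [h] at hlong
    norm_num at hlong
    omega
  have hcard : S.ncard = latticeLength E + 1 := by omega
  have hSne : S.Nonempty := by
    rw [Set.nonempty_iff_ne_empty]
    intro he
    rw [he, Set.ncard_empty] at hcard
    omega
  obtain ⟨v₀, hv₀⟩ := hSne
  have hmem : ∀ v ∈ S, dotZ u₁ v = -h₁ := by
    intro v hv
    have hvE : toQ v ∈ E := hv
    rw [hEdef] at hvE
    have := hvE.2
    rw [dotQ_toQ] at this
    exact_mod_cast this
  obtain ⟨x, y, hxy⟩ := Int.isCoprime_iff_gcd_eq_one.mpr hprim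
  set κ : Z2 → ℤ := fun v => x * (v.2 - v₀.2) - y * (v.1 - v₀.1) with hκ
  have key : ∀ v ∈ S, v.1 - v₀.1 = -(κ v) * u₁.2 ∧ v.2 - v₀.2 = κ v * u₁.1 := by
    intro v hv
    have e0 : u₁.1 * (v.1 - v₀.1) + u₁.2 * (v.2 - v₀.2) = 0 := by
      have ha := hmem v hv; have hb := hmem v₀ hv₀
      simp only [dotZ] at ha hb
      linarith
    constructor
    · simp only [hκ]; linear_combination (-(v.1 - v₀.1)) * hxy + x * e0
    · simp only [hκ]; linear_combination (-(v.2 - v₀.2)) * hxy + y * e0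
  set d := u₁.1 * u₂.2 - u₁.2 * u₂.1 with hd
  have gdiff : ∀ v ∈ S, dotZ u₂ v - dotZ u₂ v₀ = κ v * d := by
    intro v hv
    obtain ⟨k1, k2⟩ := key v hv
    simp only [dotZ, hd]
    linear_combination u₂.1 * k1 + u₂.2 * k2
  have hinj : Set.InjOn κ S := by
    intro v hv w hw hvw
    obtain ⟨kv1, kv2⟩ := key v hv
    obtain ⟨kw1, kw2⟩ := key w hw
    rw [hvw] at kv1 kv2
    have e1 : v.1 = w.1 := by linarith
    have e2 : v.2 = w.2 := by linarith
    exact Prod.ext e1 e2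
  have hfc : hfin.toFinset.card = latticeLength E + 1 := by
    rw [← Set.ncard_eq_toFinset_card S hfin]; exact hcard
  set K := hfin.toFinset.image κ with hK
  have hKcard : K.card = latticeLength E + 1 := by
    rw [hK, Finset.card_image_of_injOn (by rwa [Set.Finite.coe_toFinset]), hfc]
  have hKne : K.Nonempty := by rw [← Finset.card_pos, hKcard]; omega
  set m := K.min' hKne with hm
  set M := K.max' hKne with hM
  have hMm : (latticeLength E : ℤ) ≤ M - m := by
    have hsub : K ⊆ Finset.Icc m M := fun t ht =>
      Finset.mem_Icc.mpr ⟨K.min'_le t ht, K.le_max' t ht⟩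
    have hle := Finset.card_le_card hsub
    rw [hKcard, Int.card_Icc] at hle
    omega
  obtain ⟨va, hva, hκa⟩ := Finset.mem_image.mp (K.min'_mem hKne)
  obtain ⟨vb, hvb, hκb⟩ := Finset.mem_image.mp (K.max'_mem hKne)
  have hvaS : va ∈ S := by rwa [Set.Finite.mem_toFinset] at hva
  have hvbS : vb ∈ S := by rwa [Set.Finite.mem_toFinset] at hvb
  have ga := gdiff va hvaS
  have gb := gdiff vb hvbS
  rw [← hm] at hκa
  rw [← hM] at hκb
  rw [hκa] at ga
  rw [hκb] at gb
  rcases le_or_gt 0 d with hd0 | hd0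
  · refine ⟨va, vb, hvaS, hvbS, ?_⟩
    rw [abs_of_nonneg hd0]
    have : dotZ u₂ vb - dotZ u₂ va = (M - m) * d := by linarith [ga, gb, sub_mul M m d]
    rw [this]
    exact mul_le_mul_of_nonneg_right hMm hd0
  · refine ⟨vb, va, hvbS, hvaS, ?_⟩
    rw [abs_of_neg hd0]
    have he : dotZ u₂ va - dotZ u₂ vb = (M - m) * (-d) := by
      linarith [ga, gb, sub_mul M m (-d)]
    rw [he]
    exact mul_le_mul_of_nonneg_right hMm (le_of_lt (neg_pos.mpr hd0))

lemma point_bound (P E : Set Q2) (u : Z2) (h : ℤ) (hC : CentSym P)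
    (hE : IsEdge P E u h) (x : Q2) (hx : x ∈ P) :
    -(h : ℚ) ≤ dotQ u x ∧ dotQ u x ≤ (h : ℚ) := by
  obtain ⟨-, -, hineq, -, -⟩ := hE
  refine ⟨hineq x hx, ?_⟩
  have h2 := hineq (-x) ((hC x).mp hx)
  rw [dotQ_neg] at h2
  linarith

lemma neg_lattice_length (P E E' : Set Q2) (u : Z2) (h : ℤ) (hC : CentSym P)
    (hEdef : E = {x ∈ P | dotQ u x = -(h : ℚ)})
    (hE'def : E' = {x ∈ P | dotQ u x = (h : ℚ)}) :
    latticeLength E' = latticeLength E := by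
  have hset : {v : Z2 | toQ v ∈ E'} = (fun v : Z2 => -v) '' {v : Z2 | toQ v ∈ E} := by
    ext v
    simp only [Set.mem_setOf_eq, Set.mem_image]
    constructor
    · intro hv
      refine ⟨-v, ?_, by simp⟩
      rw [hE'def] at hv
      rw [hEdef]
      refine ⟨?_, ?_⟩
      · rw [toQ_neg]
        exact (hC (toQ v)).mp hv.1
      · rw [toQ_neg, dotQ_neg, hv.2]
    · rintro ⟨w, hw, rfl⟩
      rw [hEdef] at hw
      rw [hE'def]
      refine ⟨?_, ?_⟩
      · rw [toQ_neg]
        exact (hC (toQ w)).mp hw.1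
      · rw [toQ_neg, dotQ_neg, hw.2]; ring
  unfold latticeLength
  rw [hset, Set.ncard_image_of_injective _ neg_injective]

lemma corner_min (γ h s : ℚ) (hγ : γ ≠ 0) (hs : -h ≤ s) (hs' : s ≤ h) :
    γ * (if 0 < γ then -h else h) ≤ γ * s := by
  split_ifs with hpos
  · nlinarith
  · have : γ < 0 := lt_of_le_of_ne (not_lt.mp hpos) hγ
    nlinarith

lemma corner_min_eq (γ h s : ℚ) (hγ : γ ≠ 0)
    (he : γ * s = γ * (if 0 < γ then -h else h)) :
    s = (if 0 < γ then -h else h) :=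
  mul_left_cancel₀ hγ he

theorem stmt_8 (V : Finset Z2) (P : Set Q2) (hP : P = hull V)
    (hF : IsFanoPolygon V) (hC : CentSym P) (hR : HasRsing P)
    (E₁ E₂ : Set Q2) (u₁ u₂ : Z2) (h₁ h₂ : ℤ)
    (hE₁ : IsLongEdge P E₁ u₁ h₁) (hE₂ : IsLongEdge P E₂ u₂ h₂)
    (hne : u₂ ≠ u₁ ∧ u₂ ≠ -u₁) :
    u₁.1 * u₂.2 - u₁.2 * u₂.1 = 1 ∨ u₁.1 * u₂.2 - u₁.2 * u₂.1 = -1 := by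
  obtain ⟨hne1, hne2⟩ := hne
  set d := u₁.1 * u₂.2 - u₁.2 * u₂.1 with hd
  have hd0 : d ≠ 0 := by
    intro h0
    rcases parallel_primitive u₁ u₂ hE₁.1.1 hE₂.1.1 h0 with h | h
    exacts [hne1 h, hne2 h]
  obtain ⟨a, b, haE, hbE, hspan₁⟩ := edge_span P E₁ u₁ u₂ h₁ hE₁.1 hE₁.2
  obtain ⟨a', b', haE', hbE', hspan₂⟩ := edge_span P E₂ u₂ u₁ h₂ hE₂.1 hE₂.2
  have habs' : |u₂.1 * u₁.2 - u₂.2 * u₁.1| = |d| := by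
    rw [show u₂.1 * u₁.2 - u₂.2 * u₁.1 = -d by rw [hd]; ring, abs_neg]
  rw [habs'] at hspan₂
  obtain ⟨hprim₁, hpos₁, hineq₁, hE₁def, -⟩ := hE₁.1
  obtain ⟨hprim₂, hpos₂, hineq₂, hE₂def, -⟩ := hE₂.1
  have hL₁ : h₁ ≤ (latticeLength E₁ : ℤ) := hE₁.2
  have hL₂ : h₂ ≤ (latticeLength E₂ : ℤ) := hE₂.2
  -- bounds on lattice points in P
  have bound₁ : ∀ v : Z2, toQ v ∈ P → -h₁ ≤ dotZ u₁ v ∧ dotZ u₁ v ≤ h₁ := by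
    intro v hv
    have hb := point_bound P E₁ u₁ h₁ hC hE₁.1 (toQ v) hv
    rw [dotQ_toQ] at hb
    exact ⟨by exact_mod_cast hb.1, by exact_mod_cast hb.2⟩
  have bound₂ : ∀ v : Z2, toQ v ∈ P → -h₂ ≤ dotZ u₂ v ∧ dotZ u₂ v ≤ h₂ := by
    intro v hv
    have hb := point_bound P E₂ u₂ h₂ hC hE₂.1 (toQ v) hv
    rw [dotQ_toQ] at hb
    exact ⟨by exact_mod_cast hb.1, by exact_mod_cast hb.2⟩
  have haP : toQ a ∈ P := by rw [hE₁def] at haE; exact haE.1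
  have hbP : toQ b ∈ P := by rw [hE₁def] at hbE; exact hbE.1
  have haP' : toQ a' ∈ P := by rw [hE₂def] at haE'; exact haE'.1
  have hbP' : toQ b' ∈ P := by rw [hE₂def] at hbE'; exact hbE'.1
  have key₁ : (latticeLength E₁ : ℤ) * |d| ≤ 2 * h₂ := by
    have c1 := (bound₂ a haP).1
    have c2 := (bound₂ b hbP).2
    linarith
  have key₂ : (latticeLength E₂ : ℤ) * |d| ≤ 2 * h₁ := by
    have c1 := (bound₁ a' haP').1
    have c2 := (bound₁ b' hbP').2
    linarith
  have habs1 : 1 ≤ |d| := Int.one_le_abs hd0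
  have habs2 : |d| ≤ 2 := by
    by_contra hc
    push_neg at hc
    have h3 : (3 : ℤ) ≤ |d| := hc
    have e1 : 3 * (latticeLength E₁ : ℤ) ≤ (latticeLength E₁ : ℤ) * |d| := by
      have : (0:ℤ) ≤ (latticeLength E₁ : ℤ) := by positivity
      nlinarith
    have e2 : 3 * (latticeLength E₂ : ℤ) ≤ (latticeLength E₂ : ℤ) * |d| := by
      have : (0:ℤ) ≤ (latticeLength E₂ : ℤ) := by positivity
      nlinarith
    linarith
  rcases (by omega : |d| = 1 ∨ |d| = 2) with hd1 | hd2
  · rcases (abs_eq (by norm_num : (0:ℤ) ≤ 1)).mp hd1 with h | h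
    exacts [Or.inl h, Or.inr h]
  exfalso
  rw [hd2] at key₁ key₂ hspan₁
  -- everything equals h₁
  have hh₂ : h₂ = h₁ := by omega
  have hLL₁ : (latticeLength E₁ : ℤ) = h₁ := by omega
  have hLL₂ : (latticeLength E₂ : ℤ) = h₁ := by omega
  -- corner lattice points
  have hga : dotZ u₂ a = -h₁ ∧ dotZ u₂ b = h₁ := by
    have c1 := bound₂ a haP
    have c2 := bound₂ b hbP
    omega
  -- corner points A B
  set A := toQ a with hA
  set B := toQ b with hB
  have hA1 : dotQ u₁ A = -(h₁ : ℚ) := by rw [hE₁def] at haE; exact haE.2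
  have hB1 : dotQ u₁ B = -(h₁ : ℚ) := by rw [hE₁def] at hbE; exact hbE.2
  have hA2 : dotQ u₂ A = -(h₁ : ℚ) := by
    rw [hA, dotQ_toQ, hga.1]; push_cast; ring
  have hB2 : dotQ u₂ B = (h₁ : ℚ) := by
    rw [hB, dotQ_toQ, hga.2]
  have hnAP : -A ∈ P := (hC A).mp haP
  have hnBP : -B ∈ P := (hC B).mp hbP
  -- the bad edge from HasRsing
  obtain ⟨E, u, h', ⟨hprimu, hposu, hinequ, hEdef', c, c', hcE, hc'E, hcc'⟩, hndvd⟩ := hR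
  have hdQ : ((d : ℤ) : ℚ) ≠ 0 := Int.cast_ne_zero.mpr hd0
  set α : ℚ := ((u.1 * u₂.2 - u.2 * u₂.1 : ℤ) : ℚ) / (d : ℚ) with hα
  set β : ℚ := ((u₁.1 * u.2 - u₁.2 * u.1 : ℤ) : ℚ) / (d : ℚ) with hβ
  have hdec : ∀ x : Q2, dotQ u x = α * dotQ u₁ x + β * dotQ u₂ x := by
    intro x
    rw [hα, hβ]
    simp only [dotQ]
    have hdd : ((d:ℤ):ℚ) = (u₁.1:ℚ) * u₂.2 - (u₁.2:ℚ) * u₂.1 := by rw [hd]; push_cast; ring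
    field_simp
    rw [hdd]
    push_cast
    ring
  have Tinj : ∀ p q : Q2, dotQ u₁ p = dotQ u₁ q → dotQ u₂ p = dotQ u₂ q → p = q := by
    intro p q e1 e2
    simp only [dotQ] at e1 e2
    have hdQ' : ((u₁.1 : ℚ) * u₂.2 - (u₁.2:ℚ) * u₂.1) ≠ 0 := by
      have : ((d:ℤ):ℚ) = (u₁.1:ℚ) * u₂.2 - (u₁.2:ℚ) * u₂.1 := by rw [hd]; push_cast; ring
      rw [← this]; exact hdQ
    have e3 : ((u₁.1:ℚ) * u₂.2 - (u₁.2:ℚ) * u₂.1) * (p.1 - q.1) = 0 := by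
      linear_combination (u₂.2:ℚ) * e1 - (u₁.2:ℚ) * e2
    have e4 : ((u₁.1:ℚ) * u₂.2 - (u₁.2:ℚ) * u₂.1) * (p.2 - q.2) = 0 := by
      linear_combination (u₁.1:ℚ) * e2 - (u₂.1:ℚ) * e1
    have p1 : p.1 = q.1 := by
      have := (mul_eq_zero.mp e3).resolve_left hdQ'
      linarith
    have p2 : p.2 = q.2 := by
      have := (mul_eq_zero.mp e4).resolve_left hdQ'
      linarith
    exact Prod.ext p1 p2
  -- α = 0 or β = 0
  have hor : α = 0 ∨ β = 0 := by
    by_contra hcon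
    push_neg at hcon
    obtain ⟨hα0, hβ0⟩ := hcon
    set c₁ : ℚ := if 0 < α then -(h₁:ℚ) else (h₁:ℚ) with hc₁
    set c₂ : ℚ := if 0 < β then -(h₁:ℚ) else (h₁:ℚ) with hc₂
    have hcorner : ∃ C ∈ P, dotQ u₁ C = c₁ ∧ dotQ u₂ C = c₂ := by
      rw [hc₁, hc₂]
      rcases lt_or_ge 0 α with ha1 | ha1 <;> rcases lt_or_ge 0 β with hb1 | hb1
      · exact ⟨A, haP, by simp [ha1, hb1, hA1, hA2]⟩
      · refine ⟨B, hbP, by simp [ha1, not_lt.mpr hb1, hB1, hB2]⟩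
      · refine ⟨-B, hnBP, ?_⟩
        rw [dotQ_neg, dotQ_neg, hB1, hB2]
        simp [not_lt.mpr ha1, hb1]
      · refine ⟨-A, hnAP, ?_⟩
        rw [dotQ_neg, dotQ_neg, hA1, hA2]
        simp [not_lt.mpr ha1, not_lt.mpr hb1]
    obtain ⟨C, hCP, hC1, hC2⟩ := hcorner
    have extreme : ∀ z ∈ E, dotQ u₁ z = c₁ ∧ dotQ u₂ z = c₂ := by
      intro z hz
      rw [hEdef'] at hz
      obtain ⟨hzP, hzv⟩ := hz
      have b1 := point_bound P E₁ u₁ h₁ hC hE₁.1 z hzP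
      have b2 := point_bound P E₂ u₂ h₂ hC hE₂.1 z hzP
      rw [hh₂] at b2
      have hCge : -(h' : ℚ) ≤ dotQ u C := hinequ C hCP
      have m1 : α * c₁ ≤ α * dotQ u₁ z := by
        rw [hc₁]; exact corner_min α (h₁:ℚ) _ hα0 b1.1 b1.2
      have m2 : β * c₂ ≤ β * dotQ u₂ z := by
        rw [hc₂]; exact corner_min β (h₁:ℚ) _ hβ0 b2.1 b2.2
      have dC := hdec C
      have dz := hdec z
      rw [hC1, hC2] at dC
      rw [hzv] at dz
      have e1 : α * dotQ u₁ z = α * c₁ := by linarith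
      have e2 : β * dotQ u₂ z = β * c₂ := by linarith
      exact ⟨mul_left_cancel₀ hα0 e1, mul_left_cancel₀ hβ0 e2⟩
    have ec := extreme c hcE
    have ec' := extreme c' hc'E
    exact hcc' (Tinj c c' (ec.1.trans ec'.1.symm) (ec.2.trans ec'.2.symm))
  -- in either case derive contradiction with hndvd
  rcases hor with hα0 | hβ0
  · -- u parallel to u₂
    have hnum : u.1 * u₂.2 - u.2 * u₂.1 = 0 := by
      rw [hα] at hα0
      have := (div_eq_zero_iff.mp hα0).resolve_right hdQ
      exact_mod_cast this
    have hnum' : u₂.1 * u.2 - u₂.2 * u.1 = 0 := by linarith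
    rcases parallel_primitive u₂ u hprim₂ hprimu hnum' with hu | hu
    · -- u = u₂ : h' = h₂ and E = E₂
      rw [hu] at hEdef' hinequ
      have hh' : h' = h₂ := by
        have e1 : (h₂ : ℚ) ≤ (h' : ℚ) := by
          have := hinequ A haP
          rw [hA2] at this
          rw [hh₂]
          linarith
        have e2 : (h' : ℚ) ≤ (h₂ : ℚ) := by
          have hcP : c ∈ P := by rw [hEdef'] at hcE; exact hcE.1
          have hcv : dotQ u₂ c = -(h' : ℚ) := by rw [hEdef'] at hcE; exact hcE.2
          have := hineq₂ c hcP
          linarith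
        have : (h' : ℚ) = (h₂ : ℚ) := by linarith
        exact_mod_cast this
      have hEE : E = E₂ := by rw [hEdef', hE₂def, hh']
      rw [hEE, hh'] at hndvd
      exact hndvd (by rw [hLL₂, ← hh₂])
    · -- u = -u₂
      rw [hu] at hEdef' hinequ
      have hh' : h' = h₂ := by
        have e1 : (h₂ : ℚ) ≤ (h' : ℚ) := by
          have := hinequ B hbP
          rw [dotQ_neg_left, hB2] at this
          rw [hh₂]
          linarith
        have e2 : (h' : ℚ) ≤ (h₂ : ℚ) := by
          have hcP : c ∈ P := by rw [hEdef'] at hcE; exact hcE.1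
          have hcv : dotQ (-u₂) c = -(h' : ℚ) := by rw [hEdef'] at hcE; exact hcE.2
          rw [dotQ_neg_left] at hcv
          have := (point_bound P E₂ u₂ h₂ hC hE₂.1 c hcP).2
          linarith
        have : (h' : ℚ) = (h₂ : ℚ) := by linarith
        exact_mod_cast this
      have hEE : E = {x ∈ P | dotQ u₂ x = (h₂ : ℚ)} := by
        rw [hEdef', hh']
        ext z
        simp only [Set.mem_setOf_eq, dotQ_neg_left]
        constructor
        · rintro ⟨hz1, hz2⟩; exact ⟨hz1, by linarith⟩
        · rintro ⟨hz1, hz2⟩; exact ⟨hz1, by linarith⟩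
      have hlen : latticeLength E = latticeLength E₂ :=
        neg_lattice_length P E₂ E u₂ h₂ hC hE₂def hEE
      rw [hlen, hh'] at hndvd
      exact hndvd (by rw [hLL₂, ← hh₂])
  · -- u parallel to u₁
    have hnum : u₁.1 * u.2 - u₁.2 * u.1 = 0 := by
      rw [hβ] at hβ0
      have := (div_eq_zero_iff.mp hβ0).resolve_right hdQ
      exact_mod_cast this
    rcases parallel_primitive u₁ u hprim₁ hprimu hnum with hu | hu
    · rw [hu] at hEdef' hinequ
      have hh' : h' = h₁ := by
        have e1 : (h₁ : ℚ) ≤ (h' : ℚ) := by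
          have := hinequ A haP
          rw [hA1] at this
          linarith
        have e2 : (h' : ℚ) ≤ (h₁ : ℚ) := by
          have hcP : c ∈ P := by rw [hEdef'] at hcE; exact hcE.1
          have hcv : dotQ u₁ c = -(h' : ℚ) := by rw [hEdef'] at hcE; exact hcE.2
          have := hineq₁ c hcP
          linarith
        have : (h' : ℚ) = (h₁ : ℚ) := by linarith
        exact_mod_cast this
      have hEE : E = E₁ := by rw [hEdef', hE₁def, hh']
      rw [hEE, hh'] at hndvd
      exact hndvd (by rw [hLL₁])
    · rw [hu] at hEdef' hinequ
      have hh' : h' = h₁ := by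
        have e1 : (h₁ : ℚ) ≤ (h' : ℚ) := by
          have := hinequ (-A) hnAP
          rw [dotQ_neg_left, dotQ_neg, hA1] at this
          linarith
        have e2 : (h' : ℚ) ≤ (h₁ : ℚ) := by
          have hcP : c ∈ P := by rw [hEdef'] at hcE; exact hcE.1
          have hcv : dotQ (-u₁) c = -(h' : ℚ) := by rw [hEdef'] at hcE; exact hcE.2
          rw [dotQ_neg_left] at hcv
          have := (point_bound P E₁ u₁ h₁ hC hE₁.1 c hcP).2
          linarith
        have : (h' : ℚ) = (h₁ : ℚ) := by linarith
        exact_mod_cast this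
      have hEE : E = {x ∈ P | dotQ u₁ x = (h₁ : ℚ)} := by
        rw [hEdef', hh']
        ext z
        simp only [Set.mem_setOf_eq, dotQ_neg_left]
        constructor
        · rintro ⟨hz1, hz2⟩; exact ⟨hz1, by linarith⟩
        · rintro ⟨hz1, hz2⟩; exact ⟨hz1, by linarith⟩
      have hlen : latticeLength E = latticeLength E₁ :=
        neg_lattice_length P E₁ E u₁ h₁ hC hE₁def hEE
      rw [hlen, hh'] at hndvd
      exact hndvd (by rw [hLL₁])
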